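/- Let 𝓗 be a Hardy field and suppose f ∈ 𝓗 satisfies condition (B): there exists j ∈ ℕ such that t^{j−1} ≺ f(t) ≺ t^{j}. Then for every ℓ ∈ ℕ, the ℓ-th derivative f^{(ℓ)} satisfies either |f^{(ℓ)}(t)| → ∞ as t → ∞ or f^{(ℓ)}(t) → 0 as t → ∞. -/

import Mathlib

open Filter Real
open scoped Classical

noncomputable section

/-- `Prec f g` formalizes `f(t) ≺ g(t)`: `g(t)/f(t) → ∞` as `t → ∞`. -/
def Prec (f g : ℝ → ℝ) : Prop := Tendsto (fun t => g t / f t) atTop atTop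

/-- `Ll f g` formalizes `f(t) ≪ g(t)`: there are `C > 0` and `t₀ ≥ 1` with
`f(t) ≤ C·g(t)` for all `t ≥ t₀`. -/
def Ll (f g : ℝ → ℝ) : Prop := ∃ C : ℝ, 0 < C ∧ ∃ t₀ : ℝ, 1 ≤ t₀ ∧ ∀ t ≥ t₀, f t ≤ C * g t

/-- the iterated logarithm `log₂(t) = log log t`. -/
def log2 (t : ℝ) : ℝ := Real.log (Real.log t)

/-- the iterated logarithm `log₄(t) = log log log log t`. -/
def log4 (t : ℝ) : ℝ := Real.log (Real.log (Real.log (Real.log t)))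

/-- A Hardy field: a set of (germs at `+∞` of) eventually smooth real functions,
invariant under germ equivalence at `+∞`, forming a subring of the ring of germs that is
a field and is closed under differentiation. -/
structure HardyField where
  carrier : Set (ℝ → ℝ)
  germ_closed : ∀ f g : ℝ → ℝ, f =ᶠ[atTop] g → f ∈ carrier → g ∈ carrier
  eventually_smooth : ∀ f ∈ carrier, ∀ᶠ t in atTop, ∀ n : ℕ, ContDiffAt ℝ n f t
  zero_mem : (0 : ℝ → ℝ) ∈ carrier
  one_mem : (1 : ℝ → ℝ) ∈ carrier
  add_mem : ∀ f ∈ carrier, ∀ g ∈ carrier, f + g ∈ carrier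
  neg_mem : ∀ f ∈ carrier, -f ∈ carrier
  mul_mem : ∀ f ∈ carrier, ∀ g ∈ carrier, f * g ∈ carrier
  inv_mem : ∀ f ∈ carrier, ¬ f =ᶠ[atTop] (0 : ℝ → ℝ) →
    ∃ g ∈ carrier, f * g =ᶠ[atTop] (1 : ℝ → ℝ)
  deriv_mem : ∀ f ∈ carrier, deriv f ∈ carrier

/-- Condition (A): `log(t)·log₄(t) ≺ f(t)`. -/
def CondA (f : ℝ → ℝ) : Prop := Prec (fun t => Real.log t * log4 t) f

/-- Condition (B): there is `j ∈ ℕ`, `j ≥ 1`, with `t^(j-1) ≺ f(t) ≺ t^j`. -/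
def CondB (f : ℝ → ℝ) : Prop :=
  ∃ j : ℕ, 1 ≤ j ∧ Prec (fun t => t ^ (j - 1)) f ∧ Prec f (fun t => t ^ j)

/-- The natural density of `A ⊆ ℕ` exists and equals `L`. -/
def natDensityIs (A : Set ℕ) (L : ℝ) : Prop :=
  Tendsto (fun N : ℕ => (((Finset.Icc 1 N).filter fun n => n ∈ A).card : ℝ) / N)
    atTop (nhds L)

/-- `e(x) = e^{2πix}`. -/
def e (x : ℝ) : ℂ := Complex.exp (2 * Real.pi * Complex.I * x)

/-- The value `ζ(m) = ∑_{n ≥ 1} 1/n^m` of the Riemann zeta function at a natural number `m`. -/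
def zetaNat (m : ℕ) : ℝ := ∑' n : ℕ, (1 : ℝ) / ((n : ℝ) + 1) ^ m

section Aux

/-- In a Hardy field, every element eventually has constant sign (weak form). -/
lemma hardy_sign (𝓗 : HardyField) (g : ℝ → ℝ) (hg : g ∈ 𝓗.carrier) :
    (∀ᶠ t in atTop, 0 ≤ g t) ∨ (∀ᶠ t in atTop, g t ≤ 0) := by
  by_cases h0 : g =ᶠ[atTop] (0 : ℝ → ℝ)
  · exact Or.inl (h0.mono fun t ht => le_of_eq ht.symm)
  obtain ⟨h, -, hgh⟩ := 𝓗.inv_mem g hg h0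
  have hne : ∀ᶠ t in atTop, g t ≠ 0 := by
    filter_upwards [hgh] with t ht hz
    simp only [Pi.mul_apply, Pi.one_apply] at ht
    rw [hz, zero_mul] at ht; exact one_ne_zero ht.symm
  have hcont : ∀ᶠ t in atTop, ContinuousAt g t := by
    filter_upwards [𝓗.eventually_smooth g hg] with t ht
    exact (ht 0).continuousAt
  obtain ⟨T, hT⟩ := (hne.and hcont).exists_forall_of_atTop
  have hco : ∀ t ≥ T, ∀ s ∈ Set.Icc T t, ContinuousAt g s := fun t _ s hs => (hT s hs.1).2
  rcases lt_or_gt_of_ne (hT T le_rfl).1 with hneg | hpos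
  · right
    rw [eventually_atTop]
    refine ⟨T, fun t ht => ?_⟩
    by_contra hlt
    push_neg at hlt
    have hcon : ContinuousOn g (Set.Icc T t) := fun s hs => ((hco t ht) s hs).continuousWithinAt
    have : (0 : ℝ) ∈ Set.Icc (g T) (g t) := ⟨hneg.le, hlt.le⟩
    obtain ⟨s, hs, hgs⟩ := intermediate_value_Icc ht hcon this
    exact (hT s hs.1).1 hgs
  · left
    rw [eventually_atTop]
    refine ⟨T, fun t ht => ?_⟩
    by_contra hlt
    push_neg at hlt
    have hcon : ContinuousOn g (Set.Icc T t) := fun s hs => ((hco t ht) s hs).continuousWithinAt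
    have : (0 : ℝ) ∈ Set.Icc (g t) (g T) := ⟨hlt.le, hpos.le⟩
    obtain ⟨s, hs, hgs⟩ := intermediate_value_Icc' ht hcon this
    exact (hT s hs.1).1 hgs

lemma mono_limit (g : ℝ → ℝ) (T : ℝ) (hmono : MonotoneOn g (Set.Ici T)) :
    Tendsto g atTop atTop ∨ ∃ c, Tendsto g atTop (nhds c) := by
  set g' : ℝ → ℝ := fun t => g (max t T) with hg'
  have hmono' : Monotone g' := fun s t hst =>
    hmono (le_max_right s T) (le_max_right t T) (max_le_max hst le_rfl)
  have heq : g' =ᶠ[atTop] g := by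
    filter_upwards [eventually_ge_atTop T] with t ht
    simp [hg', max_eq_left ht]
  rcases tendsto_of_monotone hmono' with h | ⟨l, hl⟩
  · exact Or.inl (h.congr' heq)
  · exact Or.inr ⟨l, hl.congr' heq⟩

/-- Every element of a Hardy field tends to `+∞`, `-∞`, or a finite limit. -/
lemma hardy_limit (𝓗 : HardyField) (g : ℝ → ℝ) (hg : g ∈ 𝓗.carrier) :
    Tendsto g atTop atTop ∨ Tendsto g atTop atBot ∨ ∃ c, Tendsto g atTop (nhds c) := by
  have hdm := 𝓗.deriv_mem g hg
  have hdiff : ∀ᶠ t in atTop, DifferentiableAt ℝ g t := by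
    filter_upwards [𝓗.eventually_smooth g hg] with t ht
    exact (ht 1).differentiableAt (by simp)
  rcases hardy_sign 𝓗 (deriv g) hdm with hpos | hneg
  · obtain ⟨T, hT⟩ := (hpos.and hdiff).exists_forall_of_atTop
    have hmono : MonotoneOn g (Set.Ici T) := by
      apply monotoneOn_of_deriv_nonneg (convex_Ici T)
      · exact fun t ht => (hT t ht).2.continuousAt.continuousWithinAt
      · intro t ht
        rw [interior_Ici] at ht
        exact (hT t ht.le).2.differentiableWithinAt
      · intro t ht
        rw [interior_Ici] at ht
        exact (hT t ht.le).1
    rcases mono_limit g T hmono with h | ⟨c, hc⟩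
    · exact Or.inl h
    · exact Or.inr (Or.inr ⟨c, hc⟩)
  · obtain ⟨T, hT⟩ := (hneg.and hdiff).exists_forall_of_atTop
    have hanti : AntitoneOn g (Set.Ici T) := by
      apply antitoneOn_of_deriv_nonpos (convex_Ici T)
      · exact fun t ht => (hT t ht).2.continuousAt.continuousWithinAt
      · intro t ht
        rw [interior_Ici] at ht
        exact (hT t ht.le).2.differentiableWithinAt
      · intro t ht
        rw [interior_Ici] at ht
        exact (hT t ht.le).1
    have hmono : MonotoneOn (fun t => -g t) (Set.Ici T) := fun s hs t ht hst =>
      neg_le_neg (hanti hs ht hst)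
    rcases mono_limit _ T hmono with h | ⟨c, hc⟩
    · refine Or.inr (Or.inl ?_)
      exact tendsto_neg_atTop_iff.mp h
    · refine Or.inr (Or.inr ⟨-c, ?_⟩)
      have := hc.neg
      simpa using this

/-- One-sided integration bound: if `deriv f / t^ℓ → d`, then
`f t / t^(ℓ+1)` is eventually above any `b < d/(ℓ+1)`. -/
lemma step_lb (f : ℝ → ℝ) (ℓ : ℕ) (d : ℝ)
    (hdiff : ∀ᶠ t in atTop, DifferentiableAt ℝ f t)
    (hd : Tendsto (fun t => deriv f t / t ^ ℓ) atTop (nhds d))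
    (b : ℝ) (hb : b < d / ((ℓ : ℝ) + 1)) :
    ∀ᶠ t in atTop, b < f t / t ^ (ℓ + 1) := by
  have hl1 : (0 : ℝ) < (ℓ : ℝ) + 1 := by positivity
  set c : ℝ := (b * ((ℓ : ℝ) + 1) + d) / 2 with hcdef
  have hbc : b * ((ℓ : ℝ) + 1) < d := (lt_div_iff₀ hl1).mp hb
  have hc1 : b * ((ℓ : ℝ) + 1) < c := by rw [hcdef]; linarith
  have hc2 : c < d := by rw [hcdef]; linarith
  have hbc' : b < c / ((ℓ : ℝ) + 1) := (lt_div_iff₀ hl1).mpr hc1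
  have hev : ∀ᶠ t in atTop, c < deriv f t / t ^ ℓ := (tendsto_order.1 hd).1 c hc2
  obtain ⟨T, hT1, hT⟩ : ∃ T, 1 ≤ T ∧ ∀ t ≥ T,
      DifferentiableAt ℝ f t ∧ c < deriv f t / t ^ ℓ := by
    obtain ⟨T₀, hT₀⟩ := (hdiff.and hev).exists_forall_of_atTop
    exact ⟨max T₀ 1, le_max_right _ _,
      fun t ht => hT₀ t (le_trans (le_max_left _ _) ht)⟩
  set F : ℝ → ℝ := fun t => f t - c / ((ℓ : ℝ) + 1) * t ^ (ℓ + 1) with hFdef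
  have hpow : ∀ t : ℝ, HasDerivAt (fun s : ℝ => c / ((ℓ : ℝ) + 1) * s ^ (ℓ + 1))
      (c * t ^ ℓ) t := by
    intro t
    have h1 := (hasDerivAt_pow (ℓ + 1) t).const_mul (c / ((ℓ : ℝ) + 1))
    convert h1 using 1
    · rfl
    · rfl
    push_cast
    field_simp
  have hFd : ∀ t ≥ T, HasDerivAt F (deriv f t - c * t ^ ℓ) t := fun t ht =>
    ((hT t ht).1.hasDerivAt).sub (hpow t)
  have hFmono : MonotoneOn F (Set.Ici T) := by
    apply monotoneOn_of_deriv_nonneg (convex_Ici T)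
    · exact fun t ht => ((hFd t ht).continuousAt).continuousWithinAt
    · intro t ht
      rw [interior_Ici] at ht
      exact (hFd t ht.le).differentiableAt.differentiableWithinAt
    · intro t ht
      rw [interior_Ici] at ht
      rw [(hFd t ht.le).deriv]
      have htpos : (0 : ℝ) < t ^ ℓ := pow_pos (lt_of_lt_of_le zero_lt_one (hT1.trans ht.le)) ℓ
      have := (hT t ht.le).2
      rw [lt_div_iff₀ htpos] at this
      linarith
  have hzero : Tendsto (fun t : ℝ => F T / t ^ (ℓ + 1)) atTop (nhds 0) :=
    Tendsto.div_atTop tendsto_const_nhds (tendsto_pow_atTop (Nat.succ_ne_zero ℓ))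
  have heps : (0 : ℝ) < c / ((ℓ : ℝ) + 1) - b := by linarith
  have hsmall : ∀ᶠ t in atTop, |F T / t ^ (ℓ + 1)| < c / ((ℓ : ℝ) + 1) - b := by
    have := hzero.abs
    simpa using (this.eventually (gt_mem_nhds (by simpa using heps)))
  filter_upwards [eventually_ge_atTop T, hsmall] with t ht hsm
  have htpos : (0 : ℝ) < t := lt_of_lt_of_le zero_lt_one (hT1.trans ht)
  have htp : (0 : ℝ) < t ^ (ℓ + 1) := pow_pos htpos _
  have hFT : F T ≤ F t := hFmono Set.self_mem_Ici ht ht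
  have key : c / ((ℓ : ℝ) + 1) * t ^ (ℓ + 1) + F T ≤ f t := by
    have := hFT
    rw [hFdef] at this
    simp only at this
    linarith
  have h1 : c / ((ℓ : ℝ) + 1) + F T / t ^ (ℓ + 1) ≤ f t / t ^ (ℓ + 1) := by
    have := (div_le_div_iff_of_pos_right htp).mpr key
    rw [add_div, mul_div_assoc, div_self htp.ne', mul_one] at this
    exact this
  have h2 : -(c / ((ℓ : ℝ) + 1) - b) < F T / t ^ (ℓ + 1) := neg_lt_of_abs_lt hsm
  linarith

lemma step_tendsto (f : ℝ → ℝ) (ℓ : ℕ) (d : ℝ)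
    (hdiff : ∀ᶠ t in atTop, DifferentiableAt ℝ f t)
    (hd : Tendsto (fun t => deriv f t / t ^ ℓ) atTop (nhds d)) :
    Tendsto (fun t => f t / t ^ (ℓ + 1)) atTop (nhds (d / ((ℓ : ℝ) + 1))) := by
  rw [tendsto_order]
  constructor
  · exact fun b hb => step_lb f ℓ d hdiff hd b hb
  · intro b hb
    have hdiff' : ∀ᶠ t in atTop, DifferentiableAt ℝ (fun s => -f s) t :=
      hdiff.mono fun t ht => ht.neg
    have hd' : Tendsto (fun t => deriv (fun s => -f s) t / t ^ ℓ) atTop (nhds (-d)) := by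
      have : (fun t => deriv (fun s => -f s) t / t ^ ℓ)
          = fun t => -(deriv f t / t ^ ℓ) := by
        funext t; rw [deriv.fun_neg, neg_div]
      rw [this]
      exact hd.neg
    have hb' : -b < -d / ((ℓ : ℝ) + 1) := by
      rw [neg_div]
      exact neg_lt_neg hb
    filter_upwards [step_lb (fun s => -f s) ℓ (-d) hdiff' hd' (-b) hb'] with t ht
    rw [neg_div] at ht
    linarith
  
/-- If `f` is eventually smooth and `f^(ℓ) → c`, then `f t / t^ℓ → c / ℓ!`. -/
lemma iter_growth (ℓ : ℕ) : ∀ f : ℝ → ℝ,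
    (∀ᶠ t in atTop, ∀ n : ℕ, ContDiffAt ℝ n f t) →
    ∀ c : ℝ, Tendsto (iteratedDeriv ℓ f) atTop (nhds c) →
    Tendsto (fun t => f t / t ^ ℓ) atTop (nhds (c / (ℓ.factorial : ℝ))) := by
  induction ℓ with
  | zero =>
    intro f _ c hc
    simpa [iteratedDeriv_zero] using hc
  | succ n ih =>
    intro f hsmooth c hc
    have hsmooth' : ∀ᶠ t in atTop, ∀ m : ℕ, ContDiffAt ℝ m (deriv f) t := by
      filter_upwards [hsmooth] with t ht m
      have h1 : ContDiffAt ℝ ((m + 1 : ℕ) : ℕ∞) f t := ht (m + 1)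
      have h2 : ContDiffAt ℝ m (fderiv ℝ f) t :=
        h1.fderiv_right (by push_cast; exact le_refl _)
      have h3 : ContDiffAt ℝ m (fun x => fderiv ℝ f x 1) t :=
        h2.clm_apply contDiffAt_const
      exact h3.congr_of_eventuallyEq
        (Filter.Eventually.of_forall fun y => (fderiv_apply_one_eq_deriv).symm)
    have hc' : Tendsto (iteratedDeriv n (deriv f)) atTop (nhds c) := by
      rwa [iteratedDeriv_succ'] at hc
    have hih := ih (deriv f) hsmooth' c hc'
    have hdiff : ∀ᶠ t in atTop, DifferentiableAt ℝ f t := by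
      filter_upwards [hsmooth] with t ht
      exact (ht 1).differentiableAt (by simp)
    have hstep := step_tendsto f n (c / (n.factorial : ℝ)) hdiff hih
    have : c / (n.factorial : ℝ) / ((n : ℝ) + 1) = c / ((n + 1).factorial : ℝ) := by
      rw [div_div, Nat.factorial_succ]
      push_cast
      ring_nf
    rwa [this] at hstep

end Aux

/-- If `f` belongs to a Hardy field and satisfies condition (B), then for every
`ℓ ∈ ℕ` the `ℓ`-th derivative satisfies `|f^(ℓ)(t)| → ∞` or `f^(ℓ)(t) → 0` as `t → ∞`. -/
theorem stmt_3 (𝓗 : HardyField) (f : ℝ → ℝ) (hf : f ∈ 𝓗.carrier) (hB : CondB f) (ℓ : ℕ) :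
    Tendsto (fun t => |iteratedDeriv ℓ f t|) atTop atTop ∨
      Tendsto (iteratedDeriv ℓ f) atTop (nhds 0) := by
  have hmem : iteratedDeriv ℓ f ∈ 𝓗.carrier := by
    induction ℓ with
    | zero => simpa [iteratedDeriv_zero] using hf
    | succ n ih => rw [iteratedDeriv_succ]; exact 𝓗.deriv_mem _ ih
  rcases hardy_limit 𝓗 _ hmem with h | h | ⟨c, hc⟩
  · exact Or.inl (tendsto_abs_atTop_atTop.comp h)
  · exact Or.inl (tendsto_abs_atBot_atTop.comp h)
  by_cases hc0 : c = 0
  · exact Or.inr (hc0 ▸ hc)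
  exfalso
  have hgrow := iter_growth ℓ f (𝓗.eventually_smooth f hf) c hc
  have hL : c / (ℓ.factorial : ℝ) ≠ 0 :=
    div_ne_zero hc0 (Nat.cast_ne_zero.mpr (Nat.factorial_ne_zero ℓ))
  have habs : Tendsto (fun t => |f t / t ^ ℓ|) atTop (nhds (|c / (ℓ.factorial : ℝ)|)) :=
    hgrow.abs
  obtain ⟨j, hj1, hjlow, hjhigh⟩ := hB
  set L : ℝ := |c / (ℓ.factorial : ℝ)| with hLdef
  have hLpos : 0 < L := abs_pos.mpr hL
  rcases le_or_gt j ℓ with hjle | hjgt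
  · -- j ≤ ℓ : contradict t^j / f → ∞
    have hlow : ∀ᶠ t in atTop, L / 2 < |f t / t ^ ℓ| :=
      habs.eventually (eventually_gt_nhds (by linarith))
    have hbd : ∀ᶠ t in atTop, t ^ j / f t ≤ 2 / L := by
      filter_upwards [hlow, eventually_ge_atTop (1 : ℝ)] with t hlt ht1
      have htpos : (0 : ℝ) < t := lt_of_lt_of_le zero_lt_one ht1
      have hpl : (0 : ℝ) < t ^ ℓ := pow_pos htpos ℓ
      have hfa : L / 2 * t ^ ℓ < |f t| := by
        have : |f t / t ^ ℓ| = |f t| / t ^ ℓ := by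
          rw [abs_div, abs_of_pos hpl]
        rw [this, lt_div_iff₀ hpl] at hlt
        exact hlt
      have hjℓ : t ^ j ≤ t ^ ℓ := pow_le_pow_right₀ ht1 hjle
      calc t ^ j / f t ≤ |t ^ j / f t| := le_abs_self _
        _ = t ^ j / |f t| := by rw [abs_div, abs_of_pos (pow_pos htpos j)]
        _ ≤ t ^ ℓ / |f t| := by
            have hfpos : (0 : ℝ) < |f t| :=
              lt_trans (show (0:ℝ) < L / 2 * t ^ ℓ by positivity) hfa
            exact (div_le_div_iff_of_pos_right hfpos).mpr hjℓ
        _ ≤ t ^ ℓ / (L / 2 * t ^ ℓ) :=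
            div_le_div_of_nonneg_left (by positivity) (by positivity) hfa.le
        _ = 2 / L := by field_simp
    obtain ⟨t, h1, h2⟩ := ((hjhigh.eventually_gt_atTop (2 / L)).and hbd).exists
    linarith
  · -- ℓ < j, i.e. ℓ ≤ j - 1 : contradict f / t^(j-1) → ∞
    have hup : ∀ᶠ t in atTop, |f t / t ^ ℓ| < L + 1 :=
      habs.eventually (eventually_lt_nhds (by linarith))
    have hbd : ∀ᶠ t in atTop, f t / t ^ (j - 1) ≤ L + 1 := by
      filter_upwards [hup, eventually_ge_atTop (1 : ℝ)] with t hlt ht1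
      have htpos : (0 : ℝ) < t := lt_of_lt_of_le zero_lt_one ht1
      have hℓj : t ^ ℓ ≤ t ^ (j - 1) := pow_le_pow_right₀ ht1 (by omega)
      calc f t / t ^ (j - 1) ≤ |f t / t ^ (j - 1)| := le_abs_self _
        _ = |f t| / t ^ (j - 1) := by
            rw [abs_div, abs_of_pos (pow_pos htpos _)]
        _ ≤ |f t| / t ^ ℓ := by
            apply div_le_div_of_nonneg_left (abs_nonneg _) (pow_pos htpos _) hℓj
        _ = |f t / t ^ ℓ| := by rw [abs_div, abs_of_pos (pow_pos htpos _)]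
        _ ≤ L + 1 := hlt.le
    obtain ⟨t, h1, h2⟩ := ((hjlow.eventually_gt_atTop (L + 1)).and hbd).exists
    linarith

end
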